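/- Let μ be a finite measure on a set S, s : S → S a measure-preserving involution, u : S → ℝ measurable and bounded with u ∘ s = -u and |u| < 1, and φ : S → ℝ nonnegative measurable with φ ∘ s = φ. Then ∫_S φ/(1+u) dμ = ∫_S φ/(1-u²) dμ + ∫_S (u·φ)/(u²-1) dμ, and in particular ∫_S φ/(1+u) dμ ≥ ∫_S φ dμ, with equality iff φ·u² = 0 μ-almost everywhere. -/
import Mathlib


open MeasureTheory

/-- measure-theoretic core of the symbol-increase lemma. For a finite
measure `μ`, a measure-preserving involution `s`, an odd function `u` with `|u| < 1`
and an `s`-invariant nonnegative `φ`, one has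
`∫ φ/(1+u) = ∫ φ/(1-u²) + ∫ uφ/(u²-1)`, and in particular `∫ φ/(1+u) ≥ ∫ φ`,
with equality iff `φ·u² = 0` almost everywhere. -/
theorem symbol_increase_core {S : Type*} [MeasurableSpace S] (μ : Measure S)
    [IsFiniteMeasure μ] (s : S → S) (hs : MeasurePreserving s μ μ)
    (hinv : ∀ x, s (s x) = x)
    (u : S → ℝ) (hu_meas : Measurable u) (hu_bdd : ∀ x, |u x| < 1)
    (hu_odd : ∀ x, u (s x) = - u x)
    (φ : S → ℝ) (hφ_meas : Measurable φ) (hφ_nonneg : ∀ x, 0 ≤ φ x)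
    (hφ_inv : ∀ x, φ (s x) = φ x)
    (hint₀ : Integrable φ μ)
    (hint₁ : Integrable (fun x => φ x / (1 + u x)) μ)
    (hint₂ : Integrable (fun x => φ x / (1 - (u x) ^ 2)) μ)
    (hint₃ : Integrable (fun x => u x * φ x / ((u x) ^ 2 - 1)) μ) :
    (∫ x, φ x / (1 + u x) ∂μ
        = (∫ x, φ x / (1 - (u x) ^ 2) ∂μ)
          + ∫ x, u x * φ x / ((u x) ^ 2 - 1) ∂μ) ∧
    (∫ x, φ x / (1 + u x) ∂μ ≥ ∫ x, φ x ∂μ) ∧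
    ((∫ x, φ x / (1 + u x) ∂μ = ∫ x, φ x ∂μ) ↔
      (fun x => φ x * (u x) ^ 2) =ᵐ[μ] 0) := by
  have hpos : ∀ x, 0 < 1 - u x ^ 2 := by
    intro x
    have h := abs_lt.1 (hu_bdd x)
    nlinarith [h.1, h.2]
  have h1u : ∀ x, 0 < 1 + u x := by
    intro x
    have h := abs_lt.1 (hu_bdd x)
    linarith [h.1]
  have hpt : ∀ x, φ x / (1 + u x) = φ x / (1 - u x ^ 2) + u x * φ x / (u x ^ 2 - 1) := by
    intro x
    have h1 := (h1u x).ne'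
    have h2 := (hpos x).ne'
    have h3 : u x ^ 2 - 1 ≠ 0 := by intro h; apply h2; linarith
    field_simp
    ring
  have heq1 : ∫ x, φ x / (1 + u x) ∂μ
      = (∫ x, φ x / (1 - u x ^ 2) ∂μ) + ∫ x, u x * φ x / (u x ^ 2 - 1) ∂μ := by
    rw [← integral_add hint₂ hint₃]
    exact integral_congr_ae (Filter.Eventually.of_forall fun x => hpt x)
  -- the odd integral vanishes
  have hemb : MeasurableEmbedding s := by
    have he : ⇑(⟨⟨s, s, hinv, hinv⟩, hs.measurable, hs.measurable⟩ : S ≃ᵐ S) = s := rfl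
    exact he ▸ (⟨⟨s, s, hinv, hinv⟩, hs.measurable, hs.measurable⟩ : S ≃ᵐ S).measurableEmbedding
  have hzero : ∫ x, u x * φ x / (u x ^ 2 - 1) ∂μ = 0 := by
    have hcomp : ∫ x, u (s x) * φ (s x) / (u (s x) ^ 2 - 1) ∂μ
        = ∫ x, u x * φ x / (u x ^ 2 - 1) ∂μ :=
      hs.integral_comp hemb
        (fun x => u x * φ x / (u x ^ 2 - 1))
    have hneg : (fun x => u (s x) * φ (s x) / (u (s x) ^ 2 - 1))
        = fun x => -(u x * φ x / (u x ^ 2 - 1)) := by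
      funext x
      rw [hu_odd, hφ_inv]
      ring
    rw [hneg, integral_neg] at hcomp
    linarith
  have heq2 : ∫ x, φ x / (1 + u x) ∂μ = ∫ x, φ x / (1 - u x ^ 2) ∂μ := by
    rw [heq1, hzero, add_zero]
  have hptle : ∀ x, φ x ≤ φ x / (1 - u x ^ 2) := by
    intro x
    rw [le_div_iff₀ (hpos x)]
    nlinarith [hφ_nonneg x, sq_nonneg (u x)]
  have hge : ∫ x, φ x ∂μ ≤ ∫ x, φ x / (1 - u x ^ 2) ∂μ :=
    integral_mono hint₀ hint₂ hptle
  refine ⟨heq1, by rw [heq2]; exact hge, ?_⟩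
  rw [heq2]
  have hdiff : Integrable (fun x => φ x / (1 - u x ^ 2) - φ x) μ := hint₂.sub hint₀
  have hnn : 0 ≤ᵐ[μ] fun x => φ x / (1 - u x ^ 2) - φ x :=
    Filter.Eventually.of_forall fun x => sub_nonneg.2 (hptle x)
  have hzero_iff : (∫ x, (φ x / (1 - u x ^ 2) - φ x) ∂μ) = 0 ↔
      (fun x => φ x / (1 - u x ^ 2) - φ x) =ᵐ[μ] 0 :=
    integral_eq_zero_iff_of_nonneg_ae hnn hdiff
  rw [integral_sub hint₂ hint₀, sub_eq_zero] at hzero_iff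
  constructor
  · intro h
    have := hzero_iff.1 h
    filter_upwards [this] with x hx
    have h2 := hpos x
    have : φ x / (1 - u x ^ 2) = φ x := by
      have := sub_eq_zero.1 hx
      linarith [this]
    have h4 : φ x = φ x * (1 - u x ^ 2) := (div_eq_iff h2.ne').1 this
    simp only [Pi.zero_apply]
    nlinarith
  · intro h
    apply hzero_iff.2
    filter_upwards [h] with x hx
    simp only [Pi.zero_apply] at hx ⊢
    have h2 := (hpos x).ne'
    have : φ x * u x ^ 2 = 0 := hx
    have hφu : φ x * (1 - u x ^ 2) = φ x := by nlinarith
    rw [sub_eq_zero, div_eq_iff h2]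
    linarith [hφu]
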